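/- If O, P = (x,y,z), Q = (u,v,w) form an equilateral triangle with integer coordinates, O the origin, and side length l, then the cross product (a,b,c) = OP × OQ satisfies a² + b² + c² = 3d² where d = l²/2 is an integer. -/
import Mathlib


/-- For an equilateral triangle `O, P=(x,y,z), Q=(u,v,w)` in `ℤ³` with side
length `l`, the cross product `(a,b,c) = OP × OQ` satisfies `a²+b²+c² = 3d²`
with `d = l²/2 ∈ ℤ`. -/
theorem cross_product_eq (x y z u v w : ℤ) (l : ℝ)
    (h1 : l ^ 2 = ((x ^ 2 + y ^ 2 + z ^ 2 : ℤ) : ℝ))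
    (h2 : l ^ 2 = ((u ^ 2 + v ^ 2 + w ^ 2 : ℤ) : ℝ))
    (h3 : l ^ 2 = (((x - u) ^ 2 + (y - v) ^ 2 + (z - w) ^ 2 : ℤ) : ℝ)) :
    ∃ d : ℤ, l ^ 2 = 2 * (d : ℝ) ∧
      (y * w - v * z) ^ 2 + (z * u - x * w) ^ 2 + (x * v - y * u) ^ 2 = 3 * d ^ 2 := by
  have e12 : (x ^ 2 + y ^ 2 + z ^ 2 : ℤ) = u ^ 2 + v ^ 2 + w ^ 2 := by
    exact_mod_cast h1.symm.trans h2
  have e13 : (x ^ 2 + y ^ 2 + z ^ 2 : ℤ)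
      = (x - u) ^ 2 + (y - v) ^ 2 + (z - w) ^ 2 := by
    exact_mod_cast h1.symm.trans h3
  refine ⟨x * u + y * v + z * w, ?_, ?_⟩
  · have : (x ^ 2 + y ^ 2 + z ^ 2 : ℤ) = 2 * (x * u + y * v + z * w) := by nlinarith
    rw [h1, this]; push_cast; ring
  · nlinarith [sq_nonneg (x*u+y*v+z*w)]
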